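/- The Hankel determinant of the r-Bell numbers is independent of r: for every n and r, \det(B_{i+j,r})_{i,j=0}^{n} = \prod_{i=0}^{n} i!. -/

import Mathlib

/-- `rS r n k` is the r-Stirling number of the second kind `S_r(n+r, k+r)`. -/
def rS (r : ℕ) : ℕ → ℕ → ℕ
  | 0, 0 => 1
  | 0, _ + 1 => 0
  | n + 1, 0 => r * rS r n 0
  | n + 1, k + 1 => (k + 1 + r) * rS r n (k + 1) + rS r n k

/-- The r-Stirling number of the second kind `S_r(n,k)`. -/
def rStirling (r n k : ℕ) : ℕ :=
  if r ≤ n ∧ r ≤ k then rS r (n - r) (k - r) else 0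

/-- The r-Bell polynomial `B_{n,r}(x)` as a real function. -/
def rBellPoly (r n : ℕ) (x : ℝ) : ℝ :=
  ∑ k ∈ Finset.range (n + 1), (rS r n k : ℝ) * x ^ k

/-- The r-Bell number `B_{n,r}`. -/
def rBell (r n : ℕ) : ℕ :=
  ∑ k ∈ Finset.range (n + 1), rS r n k

open Finset

lemma rS_eq_zero {r n k : ℕ} (h : n < k) : rS r n k = 0 := by
  induction n generalizing k with
  | zero =>
    cases k with
    | zero => omega
    | succ k => rfl
  | succ n ih =>
    cases k with
    | zero => omega
    | succ k =>
      show (k + 1 + r) * rS r n (k + 1) + rS r n k = 0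
      rw [ih (by omega), ih (by omega), mul_zero]

lemma rS_self (r n : ℕ) : rS r n n = 1 := by
  induction n with
  | zero => rfl
  | succ n ih =>
    show (n + 1 + r) * rS r n (n + 1) + rS r n n = 1
    rw [rS_eq_zero (Nat.lt_succ_self n), mul_zero, zero_add, ih]

/-- The connection coefficients of `(x+r)^n` in the (monic, a = 1) Charlier basis. -/
def cc (r n k : ℕ) : ℕ := ∑ j ∈ Finset.range (n + 1), j.choose k * rS r n j

lemma cc_eq_zero {r n k : ℕ} (h : n < k) : cc r n k = 0 := by
  apply Finset.sum_eq_zero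
  intro j hj
  rw [Nat.choose_eq_zero_of_lt (by simp only [mem_range] at hj; omega), zero_mul]

lemma cc_zero_right (r n : ℕ) : cc r n 0 = rBell r n := by
  simp [cc, rBell]

lemma cc_self (r n : ℕ) : cc r n n = 1 := by
  unfold cc
  rw [Finset.sum_range_succ, rS_self, Nat.choose_self]
  rw [Finset.sum_eq_zero fun j hj => by
    rw [Nat.choose_eq_zero_of_lt (by simp only [mem_range] at hj; omega), zero_mul]]

lemma sum_shift (r n : ℕ) (f : ℕ → ℕ) :
    (∑ j ∈ range (n + 1), f (j + 1) * rS r n (j + 1)) + f 0 * rS r n 0 =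
      ∑ j ∈ range (n + 1), f j * rS r n j := by
  rw [Finset.sum_range_succ (fun j => f (j + 1) * rS r n (j + 1)),
    rS_eq_zero (Nat.lt_succ_self n), mul_zero, add_zero,
    Finset.sum_range_succ' (fun j => f j * rS r n j)]

lemma cc_succ_zero (r n : ℕ) : cc r (n + 1) 0 = (1 + r) * cc r n 0 + cc r n 1 := by
  have key : (∑ j ∈ range (n + 1), (j + r) * rS r n j) + ∑ j ∈ range (n + 1), rS r n j
      = (1 + r) * cc r n 0 + cc r n 1 := by
    unfold cc
    rw [Finset.mul_sum, ← Finset.sum_add_distrib, ← Finset.sum_add_distrib]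
    exact Finset.sum_congr rfl fun j _ => by
      rw [Nat.choose_zero_right, Nat.choose_one_right]; ring
  rw [← key]
  unfold cc
  rw [Finset.sum_range_succ' (fun j => j.choose 0 * rS r (n + 1) j)]
  have h1 : ∀ j ∈ range (n + 1), (j + 1).choose 0 * rS r (n + 1) (j + 1)
      = (j + 1 + r) * rS r n (j + 1) + rS r n j := fun j _ => by
    rw [Nat.choose_zero_right, one_mul]; rfl
  rw [Finset.sum_congr rfl h1, Finset.sum_add_distrib,
    show Nat.choose 0 0 * rS r (n + 1) 0 = r * rS r n 0 from by
      rw [Nat.choose_self, one_mul]; rfl]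
  have h2 := sum_shift r n (fun j => j + r)
  simp only [zero_add] at h2
  set a := r * rS r n 0 with ha
  set S1 := ∑ j ∈ range (n + 1), (j + 1 + r) * rS r n (j + 1) with hS1
  set S2 := ∑ j ∈ range (n + 1), rS r n j with hS2
  set T := ∑ j ∈ range (n + 1), (j + r) * rS r n j with hT
  omega

lemma cc_succ_succ (r n k : ℕ) :
    cc r (n + 1) (k + 1) =
      cc r n k + (k + 2 + r) * cc r n (k + 1) + (k + 2) * cc r n (k + 2) := by
  have term : ∀ j : ℕ, j.choose (k + 1) * (j + r) + (j + 1).choose (k + 1)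
      = j.choose k + (k + 2 + r) * j.choose (k + 1) + (k + 2) * j.choose (k + 2) := by
    intro j
    have h := Nat.add_one_mul_choose_eq j (k + 1)
    have hp : (j + 1).choose (k + 2) = j.choose (k + 1) + j.choose (k + 2) :=
      Nat.choose_succ_succ j (k + 1)
    have hp2 : (j + 1).choose (k + 1) = j.choose k + j.choose (k + 1) :=
      Nat.choose_succ_succ j k
    rw [hp] at h
    rw [hp2]
    zify at h ⊢
    linear_combination h
  have key : (∑ j ∈ range (n + 1),
        (j.choose (k + 1) * (j + r) + (j + 1).choose (k + 1)) * rS r n j)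
      = cc r n k + (k + 2 + r) * cc r n (k + 1) + (k + 2) * cc r n (k + 2) := by
    unfold cc
    rw [Finset.mul_sum, Finset.mul_sum, ← Finset.sum_add_distrib, ← Finset.sum_add_distrib]
    exact Finset.sum_congr rfl fun j _ => by rw [term j]; ring
  rw [← key]
  unfold cc
  rw [Finset.sum_range_succ' (fun j => j.choose (k + 1) * rS r (n + 1) j),
    Nat.choose_eq_zero_of_lt (Nat.succ_pos k), zero_mul, add_zero]
  have expand : ∀ j ∈ range (n + 1), (j + 1).choose (k + 1) * rS r (n + 1) (j + 1)
      = ((j + 1).choose (k + 1) * (j + 1 + r)) * rS r n (j + 1)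
        + (j + 1).choose (k + 1) * rS r n j := fun j _ => by
    show (j + 1).choose (k + 1) * ((j + 1 + r) * rS r n (j + 1) + rS r n j) = _
    ring
  rw [Finset.sum_congr rfl expand, Finset.sum_add_distrib]
  have h2 := sum_shift r n (fun j => j.choose (k + 1) * (j + r))
  rw [Nat.choose_eq_zero_of_lt (Nat.succ_pos k), zero_mul, zero_mul, add_zero] at h2
  have goalsplit : ∑ j ∈ range (n + 1),
      (j.choose (k + 1) * (j + r) + (j + 1).choose (k + 1)) * rS r n j
      = (∑ j ∈ range (n + 1), (j.choose (k + 1) * (j + r)) * rS r n j)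
        + ∑ j ∈ range (n + 1), (j + 1).choose (k + 1) * rS r n j := by
    rw [← Finset.sum_add_distrib]
    exact Finset.sum_congr rfl fun j _ => by ring
  rw [goalsplit, ← h2]

/-- Symmetrized bilinear sum. -/
def FF (r m n : ℕ) : ℕ :=
  ∑ k ∈ range (m + n + 1), k.factorial * (cc r m k * cc r n k)

lemma FF_comm (r m n : ℕ) : FF r m n = FF r n m := by
  unfold FF
  rw [add_comm m n]
  exact Finset.sum_congr rfl fun k _ => by ring

def GG (r m n : ℕ) : ℕ :=
  (∑ k ∈ range (m + n + 2), k.factorial * (k + 1 + r) * (cc r m k * cc r n k)) +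
    ∑ k ∈ range (m + n + 2),
      (k + 1).factorial * (cc r m k * cc r n (k + 1) + cc r m (k + 1) * cc r n k)

lemma GG_comm (r m n : ℕ) : GG r m n = GG r n m := by
  unfold GG
  rw [add_comm m n]
  congr 1
  · exact Finset.sum_congr rfl fun k _ => by ring
  · exact Finset.sum_congr rfl fun k _ => by ring

lemma FF_succ (r m n : ℕ) : FF r (m + 1) n = GG r m n := by
  have hsplit : ∀ k : ℕ, (k + 1).factorial * (cc r (m + 1) (k + 1) * cc r n (k + 1))
      = (k + 1).factorial * (cc r m k * cc r n (k + 1))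
        + (k + 1).factorial * (k + 2 + r) * (cc r m (k + 1) * cc r n (k + 1))
        + (k + 2).factorial * (cc r m (k + 2) * cc r n (k + 1)) := by
    intro k
    rw [cc_succ_succ, Nat.factorial_succ (k + 1)]
    ring
  set SB := ∑ k ∈ range (m + n + 1), (k + 1).factorial * (cc r m k * cc r n (k + 1)) with hSB
  set SA := ∑ k ∈ range (m + n + 1),
    (k + 1).factorial * (k + 2 + r) * (cc r m (k + 1) * cc r n (k + 1)) with hSA
  set SC := ∑ k ∈ range (m + n + 1),
    (k + 2).factorial * (cc r m (k + 2) * cc r n (k + 1)) with hSC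
  have hL2 : FF r (m + 1) n
      = SB + SA + SC + ((1 + r) * (cc r m 0 * cc r n 0) + cc r m 1 * cc r n 0) := by
    unfold FF
    rw [show m + 1 + n + 1 = (m + n + 1) + 1 from by omega,
      Finset.sum_range_succ' (fun k => k.factorial * (cc r (m + 1) k * cc r n k)),
      Finset.sum_congr rfl (fun k _ => hsplit k), Finset.sum_add_distrib,
      Finset.sum_add_distrib, cc_succ_zero, Nat.factorial_zero]
    rw [hSB, hSA, hSC]
    ring
  have hGA : (∑ k ∈ range (m + n + 2), k.factorial * (k + 1 + r) * (cc r m k * cc r n k))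
      = SA + (1 + r) * (cc r m 0 * cc r n 0) := by
    rw [Finset.sum_range_succ' (fun k => k.factorial * (k + 1 + r) * (cc r m k * cc r n k))]
    congr 1
    all_goals norm_num
  have hGB : (∑ k ∈ range (m + n + 2), (k + 1).factorial * (cc r m k * cc r n (k + 1))) = SB := by
    rw [Finset.sum_range_succ, show cc r m (m + n + 1) = 0 from cc_eq_zero (by omega)]
    simp [hSB]
  have hGC : (∑ k ∈ range (m + n + 2), (k + 1).factorial * (cc r m (k + 1) * cc r n k))
      = SC + cc r m 1 * cc r n 0 := by
    rw [Finset.sum_range_succ' (fun k => (k + 1).factorial * (cc r m (k + 1) * cc r n k))]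
    congr 1
    all_goals norm_num
  have hG2 : (∑ k ∈ range (m + n + 2),
        (k + 1).factorial * (cc r m k * cc r n (k + 1) + cc r m (k + 1) * cc r n k))
      = (∑ k ∈ range (m + n + 2), (k + 1).factorial * (cc r m k * cc r n (k + 1)))
        + ∑ k ∈ range (m + n + 2), (k + 1).factorial * (cc r m (k + 1) * cc r n k) := by
    rw [← Finset.sum_add_distrib]
    exact Finset.sum_congr rfl fun k _ => by ring
  have hGsplit : GG r m n
      = (SA + (1 + r) * (cc r m 0 * cc r n 0)) + (SB + (SC + cc r m 1 * cc r n 0)) := by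
    unfold GG
    rw [hG2, hGA, hGB, hGC]
  rw [hL2, hGsplit]
  ring

lemma FF_eq (r m n : ℕ) : FF r m n = rBell r (m + n) := by
  induction m generalizing n with
  | zero =>
    unfold FF
    rw [Finset.sum_eq_single_of_mem 0 (by simp) (fun k hk hk0 => by
      rw [show cc r 0 k = 0 from cc_eq_zero (by omega), zero_mul, mul_zero])]
    rw [show cc r 0 0 = 1 from cc_self r 0, Nat.factorial_zero, one_mul, one_mul,
      cc_zero_right, Nat.zero_add]
  | succ m ih =>
    have h : FF r (m + 1) n = FF r m (n + 1) := by
      rw [FF_succ, GG_comm, ← FF_succ, FF_comm]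
    rw [h, ih, show m + (n + 1) = m + 1 + n from by omega]

lemma sum_cc (r m n N : ℕ) (h : m < N) :
    ∑ k ∈ range N, k.factorial * (cc r m k * cc r n k) = rBell r (m + n) := by
  have stable : ∀ M, m < M →
      ∑ k ∈ range M, k.factorial * (cc r m k * cc r n k)
        = ∑ k ∈ range (m + 1), k.factorial * (cc r m k * cc r n k) := by
    intro M hM
    refine (Finset.sum_subset (Finset.range_subset_range.mpr hM) fun k _ hk => ?_).symm
    rw [show cc r m k = 0 from cc_eq_zero (by simp only [mem_range] at hk; omega),
      zero_mul, mul_zero]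
  rw [stable N h, ← stable (m + n + 1) (by omega)]
  exact FF_eq r m n

theorem rBell_hankel (n r : ℕ) :
    Matrix.det (Matrix.of fun i j : Fin (n + 1) => (rBell r ((i : ℕ) + (j : ℕ)) : ℤ)) =
      ∏ i ∈ Finset.range (n + 1), (i.factorial : ℤ) := by
  set L : Matrix (Fin (n + 1)) (Fin (n + 1)) ℤ :=
    Matrix.of fun i k : Fin (n + 1) => (cc r i k : ℤ) with hL
  set D : Matrix (Fin (n + 1)) (Fin (n + 1)) ℤ :=
    Matrix.diagonal fun k : Fin (n + 1) => ((k : ℕ).factorial : ℤ) with hD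
  have key : (Matrix.of fun i j : Fin (n + 1) => (rBell r ((i : ℕ) + (j : ℕ)) : ℤ))
      = L * D * L.transpose := by
    ext i j
    rw [Matrix.mul_apply]
    simp only [hL, hD, Matrix.mul_diagonal, Matrix.transpose_apply, Matrix.of_apply]
    have hcast : ((rBell r ((i : ℕ) + (j : ℕ)) : ℕ) : ℤ)
        = ((∑ k ∈ range (n + 1), k.factorial * (cc r i k * cc r j k) : ℕ) : ℤ) := by
      rw [sum_cc r i j (n + 1) i.isLt]
    rw [hcast]
    push_cast
    rw [← Fin.sum_univ_eq_sum_range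
      (fun k => ((k.factorial : ℤ) * ((cc r i k : ℤ) * (cc r j k : ℤ)))) (n + 1)]
    exact Finset.sum_congr rfl fun k _ => by ring
  rw [key, Matrix.det_mul, Matrix.det_mul, Matrix.det_transpose]
  have ht : L.BlockTriangular OrderDual.toDual := by
    intro i j hij
    have hij' : i < j := hij
    simp only [hL, Matrix.of_apply]
    rw [show cc r i j = 0 from cc_eq_zero (by exact_mod_cast hij'), Nat.cast_zero]
  have hLdet : L.det = 1 := by
    rw [Matrix.det_of_lowerTriangular L ht]
    simp [hL, cc_self]
  rw [hLdet, Matrix.det_diagonal, one_mul, mul_one]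
  rw [← Fin.prod_univ_eq_prod_range (fun i => (i.factorial : ℤ))]
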